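/- Let Ñ⁺ = { μ ∈ M₂(ℝ) : μ symmetric, det μ = 0, trace μ > 0 }, let F₁(Ñ⁺) be the set of functions f̃ : Ñ⁺ → ℝ with f̃(tμ) = t f̃(μ) for all t > 0 and μ ∈ Ñ⁺, and let F₂(I) be the set of functions ψ : ℝ² \ {0} → ℝ which are homogeneous of degree 2 under all nonzero real scalings, i.e. ψ(qσ) = q² ψ(σ) for all q ∈ ℝ \ {0} and σ ∈ ℝ² \ {0}. Then the map sending f̃ to the function ψ(σ) = f̃(σᵀσ) is a bijection from F₁(Ñ⁺) onto F₂(I). -/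
import Mathlib


open Matrix

noncomputable section

/-- The realized future null cone
`Ñ⁺ = {μ ∈ M₂(ℝ) : μ symmetric, det μ = 0, trace μ > 0}`. -/
def Ntilde : Set (Matrix (Fin 2) (Fin 2) ℝ) :=
  {μ | μ.IsSymm ∧ μ.det = 0 ∧ 0 < μ.trace}

/-- The outer product `σᵀσ`. -/
def outer (σ : Fin 2 → ℝ) : Matrix (Fin 2) (Fin 2) ℝ :=
  Matrix.of fun i j => σ i * σ j

lemma outer_mem {σ : Fin 2 → ℝ} (hσ : σ ≠ 0) : outer σ ∈ Ntilde := by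
  have h : σ 0 ≠ 0 ∨ σ 1 ≠ 0 := by
    by_contra h; push_neg at h
    exact hσ (funext fun i => by fin_cases i <;> simp [h.1, h.2])
  refine ⟨?_, ?_, ?_⟩
  · ext i j; simp [outer, Matrix.transpose_apply, mul_comm]
  · simp [outer, Matrix.det_fin_two]; ring
  · have htr : (outer σ).trace = σ 0 * σ 0 + σ 1 * σ 1 := by
      simp [outer, Matrix.trace_fin_two]
    rw [htr]
    rcases h with h | h
    · exact add_pos_of_pos_of_nonneg (mul_self_pos.mpr h) (mul_self_nonneg _)
    · exact add_pos_of_nonneg_of_pos (mul_self_nonneg _) (mul_self_pos.mpr h)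

lemma smul_mem_Ntilde {t : ℝ} (ht : 0 < t) {μ : Matrix (Fin 2) (Fin 2) ℝ}
    (hμ : μ ∈ Ntilde) : t • μ ∈ Ntilde := by
  obtain ⟨h1, h2, h3⟩ := hμ
  refine ⟨?_, ?_, ?_⟩
  · rw [Matrix.IsSymm, Matrix.transpose_smul, h1]
  · rw [Matrix.det_smul, h2, mul_zero]
  · rw [Matrix.trace_smul, smul_eq_mul]
    exact mul_pos ht h3

/-- `F₁(Ñ⁺)`: functions `f̃ : Ñ⁺ → ℝ` with `f̃(tμ) = t f̃(μ)` for all `t > 0`. -/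
def Homog1 (f : Ntilde → ℝ) : Prop :=
  ∀ (t : ℝ) (ht : 0 < t) (μ : Ntilde), f ⟨t • μ.1, smul_mem_Ntilde ht μ.2⟩ = t * f μ

/-- `F₂(I)`: functions `ψ : ℝ² \ {0} → ℝ` with `ψ(qσ) = q² ψ(σ)` for all `q ≠ 0`. -/
def Homog2 (ψ : {σ : Fin 2 → ℝ // σ ≠ 0} → ℝ) : Prop :=
  ∀ (q : ℝ) (hq : q ≠ 0) (σ : {σ : Fin 2 → ℝ // σ ≠ 0}),
    ψ ⟨q • σ.1, smul_ne_zero hq σ.2⟩ = q^2 * ψ σ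


lemma outer_smul (r : ℝ) (v : Fin 2 → ℝ) : outer (r • v) = (r * r) • outer v := by
  ext i j
  simp [outer, Pi.smul_apply, Matrix.smul_apply, smul_eq_mul]
  ring

lemma exists_rep {μ : Matrix (Fin 2) (Fin 2) ℝ} (hμ : μ ∈ Ntilde) :
    ∃ σ : Fin 2 → ℝ, σ ≠ 0 ∧ outer σ = μ := by
  obtain ⟨hs, hd, ht⟩ := hμ
  have hb : μ 1 0 = μ 0 1 := by
    have := congrFun (congrFun hs 0) 1
    simpa [Matrix.transpose_apply] using this
  rw [Matrix.det_fin_two, hb] at hd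
  rw [Matrix.trace_fin_two] at ht
  have ha0 : 0 ≤ μ 0 0 := by nlinarith [sq_nonneg (μ 0 1)]
  have hc0 : 0 ≤ μ 1 1 := by nlinarith [sq_nonneg (μ 0 1)]
  rcases eq_or_lt_of_le ha0 with h | h
  · have hbz : μ 0 1 = 0 := by nlinarith
    have hcpos : 0 < μ 1 1 := by linarith
    refine ⟨![0, Real.sqrt (μ 1 1)], ?_, ?_⟩
    · intro hcon
      have := congrFun hcon 1
      simp [Real.sqrt_eq_zero', not_le.mpr hcpos] at this
    · ext i j
      fin_cases i <;> fin_cases j <;>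
        simp [outer, hb, hbz, ← h, Real.mul_self_sqrt hcpos.le]
  · have hsa : Real.sqrt (μ 0 0) ≠ 0 := by positivity
    have haa : Real.sqrt (μ 0 0) * Real.sqrt (μ 0 0) = μ 0 0 := Real.mul_self_sqrt h.le
    refine ⟨![Real.sqrt (μ 0 0), μ 0 1 / Real.sqrt (μ 0 0)], ?_, ?_⟩
    · intro hcon
      have := congrFun hcon 0
      simp [Real.sqrt_eq_zero', not_le.mpr h] at this
    · ext i j
      fin_cases i <;> fin_cases j <;> simp [outer, hb, haa]
      · field_simp
      · field_simp
      · field_simp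
        nlinarith

lemma rep_sign {σ τ : Fin 2 → ℝ} (h : outer σ = outer τ) : τ = σ ∨ τ = -σ := by
  have h00 := congrFun (congrFun h 0) 0
  have h01 := congrFun (congrFun h 0) 1
  have h11 := congrFun (congrFun h 1) 1
  simp [outer] at h00 h01 h11
  have fext : ∀ u v : Fin 2 → ℝ, u 0 = v 0 → u 1 = v 1 → u = v := by
    intro u v h0 h1; funext i; fin_cases i <;> assumption
  have e0 : τ 0 = σ 0 ∨ τ 0 = -σ 0 := by
    rcases mul_self_eq_mul_self_iff.mp h00 with h' | h'
    · exact Or.inl h'.symm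
    · exact Or.inr (by linarith)
  have e1 : τ 1 = σ 1 ∨ τ 1 = -σ 1 := by
    rcases mul_self_eq_mul_self_iff.mp h11 with h' | h'
    · exact Or.inl h'.symm
    · exact Or.inr (by linarith)
  rcases e0 with h0 | h0 <;> rcases e1 with h1 | h1
  · exact Or.inl (fext _ _ h0 h1)
  · have hz : σ 0 * σ 1 = 0 := by rw [h0, h1] at h01; linarith
    rcases mul_eq_zero.mp hz with hz | hz
    · exact Or.inr (fext _ _ (by simp [h0, hz]) (by simpa using h1))
    · exact Or.inl (fext _ _ h0 (by simp [h1, hz]))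
  · have hz : σ 0 * σ 1 = 0 := by rw [h0, h1] at h01; linarith
    rcases mul_eq_zero.mp hz with hz | hz
    · exact Or.inl (fext _ _ (by simp [h0, hz]) h1)
    · exact Or.inr (fext _ _ (by simpa using h0) (by simp [h1, hz]))
  · exact Or.inr (fext _ _ (by simpa using h0) (by simpa using h1))

lemma psi_eq_of_outer_eq {ψ : {σ : Fin 2 → ℝ // σ ≠ 0} → ℝ} (hψ : Homog2 ψ)
    (σ τ : {σ : Fin 2 → ℝ // σ ≠ 0}) (h : outer σ.1 = outer τ.1) : ψ σ = ψ τ := by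
  rcases rep_sign h with h' | h'
  · exact (congrArg ψ (Subtype.ext h')).symm
  · have key := hψ (-1) (by norm_num) σ
    have hτ : τ = ⟨(-1 : ℝ) • σ.1, smul_ne_zero (by norm_num) σ.2⟩ := by
      apply Subtype.ext; simp [h']
    rw [hτ, key]; ring

/-- The map sending `f̃ ∈ F₁(Ñ⁺)` to `ψ(σ) = f̃(σᵀσ)` is a bijection from `F₁(Ñ⁺)`
onto `F₂(I)`. -/
theorem homog1_bijOn_homog2 :
    Set.BijOn
      (fun (f : Ntilde → ℝ) => fun (σ : {σ : Fin 2 → ℝ // σ ≠ 0}) =>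
        f ⟨outer σ.1, outer_mem σ.2⟩)
      {f | Homog1 f} {ψ | Homog2 ψ} := by
  refine ⟨?_, ?_, ?_⟩
  · -- MapsTo
    intro f hf q hq σ
    have h1 : outer (q • σ.1) = (q ^ 2) • outer σ.1 := by
      rw [outer_smul]; ring_nf
    have hq2 : (0 : ℝ) < q ^ 2 := by positivity
    have key := hf (q ^ 2) hq2 ⟨outer σ.1, outer_mem σ.2⟩
    simp only [Set.mem_setOf_eq] at *
    rw [← key]
    exact congrArg f (Subtype.ext h1)
  · -- InjOn
    intro f hf g hg heq
    funext μ
    obtain ⟨σ, hσ, ho⟩ := exists_rep μ.2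
    have hgf := congrFun heq ⟨σ, hσ⟩
    simp only at hgf
    have hμeq : (⟨outer σ, outer_mem hσ⟩ : Ntilde) = μ := Subtype.ext ho
    rw [← hμeq]
    exact hgf
  · -- SurjOn
    intro ψ hψ
    refine ⟨fun μ => ψ ⟨(exists_rep μ.2).choose, (exists_rep μ.2).choose_spec.1⟩, ?_, ?_⟩
    · -- Homog1
      intro t ht μ
      set ν : Ntilde := ⟨t • μ.1, smul_mem_Ntilde ht μ.2⟩ with hν
      have hst : Real.sqrt t * Real.sqrt t = t := Real.mul_self_sqrt ht.le
      have hstne : Real.sqrt t ≠ 0 := by positivity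
      have hστ : outer ((exists_rep ν.2).choose) =
          outer (Real.sqrt t • (exists_rep μ.2).choose) := by
        rw [(exists_rep ν.2).choose_spec.2, outer_smul, hst,
          (exists_rep μ.2).choose_spec.2]
      have hk := psi_eq_of_outer_eq hψ
        ⟨(exists_rep ν.2).choose, (exists_rep ν.2).choose_spec.1⟩
        ⟨Real.sqrt t • (exists_rep μ.2).choose,
          smul_ne_zero hstne (exists_rep μ.2).choose_spec.1⟩ hστ
      simp only at hk ⊢
      rw [hk, hψ (Real.sqrt t) hstne
        ⟨(exists_rep μ.2).choose, (exists_rep μ.2).choose_spec.1⟩, Real.sq_sqrt ht.le]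
    · -- image
      funext σ
      simp only
      exact psi_eq_of_outer_eq hψ
        ⟨(exists_rep (outer_mem σ.2)).choose, (exists_rep (outer_mem σ.2)).choose_spec.1⟩
        σ (exists_rep (outer_mem σ.2)).choose_spec.2
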